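/- For every integer n ≥ 1 and every real k > 1, the normalized upper incomplete gamma function satisfies Γ(n, k n)/Γ(n) ≤ (k e^{1-k})^n. -/

import Mathlib

open Real

/-- The upper incomplete gamma function `Γ(n, z) = ∫_z^∞ t^(n-1) e^{-t} dt`. -/
noncomputable def upperIncGamma (n : ℕ) (z : ℝ) : ℝ :=
  ∫ t in Set.Ioi z, t ^ (n - 1) * Real.exp (-t)

theorem upperIncGamma_ratio_le (n : ℕ) (hn : 1 ≤ n) (k : ℝ) (hk : 1 < k) :
    upperIncGamma n (k * n) / Real.Gamma n ≤ (k * Real.exp (1 - k)) ^ n := by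
  have hn0 : (0:ℝ) < n := by exact_mod_cast hn
  have hk0 : (0:ℝ) < k := by linarith
  have hki : (0:ℝ) < k⁻¹ := by positivity
  have hki1 : k⁻¹ < 1 := by
    rw [inv_lt_one_iff₀]; right; exact hk
  set c : ℝ := k * n with hc
  have hc0 : 0 < c := by positivity
  have hGpos : 0 < Real.Gamma n := Real.Gamma_pos_of_pos hn0
  rw [div_le_iff₀ hGpos]
  set C : ℝ := Real.exp (-((1 - k⁻¹) * c)) with hC
  set g : ℝ → ℝ := fun t => t ^ ((n:ℝ) - 1) * Real.exp (-(k⁻¹ * t)) with hg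
  have hn1 : (-1:ℝ) < (n:ℝ) - 1 := by linarith
  have hintg : MeasureTheory.IntegrableOn g (Set.Ioi 0) := by
    have := integrableOn_rpow_mul_exp_neg_mul_rpow (p := 1) (s := (n:ℝ)-1)
      (b := k⁻¹) hn1 one_pos hki
    simpa [hg, Real.rpow_one, neg_mul] using this
  have hint1 : MeasureTheory.IntegrableOn
      (fun t : ℝ => t ^ (n - 1) * Real.exp (-t)) (Set.Ioi c) := by
    have h1 : MeasureTheory.IntegrableOn
        (fun t : ℝ => t ^ ((n:ℝ) - 1) * Real.exp (-t)) (Set.Ioi 0) := by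
      have := integrableOn_rpow_mul_exp_neg_mul_rpow (p := 1) (s := (n:ℝ)-1)
        (b := 1) hn1 one_pos one_pos
      simpa [Real.rpow_one, neg_mul] using this
    have h2 := h1.mono_set (Set.Ioi_subset_Ioi hc0.le)
    refine h2.congr_fun (fun t ht => ?_) measurableSet_Ioi
    have ht0 : (0:ℝ) < t := lt_trans hc0 ht
    rw [← Real.rpow_natCast t (n-1)]
    congr 1
    push_cast [Nat.cast_sub hn]
    ring_nf
  have hgnonneg : ∀ t ∈ Set.Ioi (0:ℝ), 0 ≤ g t := fun t ht => by
    have : (0:ℝ) < t := ht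
    positivity
  -- Step 1: pointwise bound on Ioi c
  have step1 : upperIncGamma n c ≤ ∫ t in Set.Ioi c, C * g t := by
    refine MeasureTheory.setIntegral_mono_on hint1 (hintg.mono_set
      (Set.Ioi_subset_Ioi hc0.le) |>.const_mul C) measurableSet_Ioi (fun t ht => ?_)
    have htc : c < t := ht
    have ht0 : (0:ℝ) < t := lt_trans hc0 htc
    have hpow : t ^ (n - 1) = t ^ ((n:ℝ) - 1) := by
      rw [← Real.rpow_natCast t (n-1)]
      congr 1
      push_cast [Nat.cast_sub hn]
      ring
    have hexp : Real.exp (-t) ≤ C * Real.exp (-(k⁻¹ * t)) := by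
      rw [hC, ← Real.exp_add]
      apply Real.exp_le_exp.2
      have h1k : 0 < 1 - k⁻¹ := by linarith
      nlinarith
    calc t ^ (n - 1) * Real.exp (-t)
        ≤ t ^ ((n:ℝ) - 1) * (C * Real.exp (-(k⁻¹ * t))) := by
          rw [hpow]
          exact mul_le_mul_of_nonneg_left hexp (by positivity)
      _ = C * g t := by rw [hg]; ring
  -- Step 2: enlarge domain
  have step2 : ∫ t in Set.Ioi c, C * g t ≤ C * ∫ t in Set.Ioi 0, g t := by
    rw [MeasureTheory.integral_const_mul]
    have hCpos : 0 ≤ C := Real.exp_nonneg _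
    apply mul_le_mul_of_nonneg_left _ hCpos
    apply MeasureTheory.setIntegral_mono_set hintg
    · filter_upwards [MeasureTheory.ae_restrict_mem measurableSet_Ioi] with t ht
      exact hgnonneg t ht
    · exact Filter.Eventually.of_forall (Set.Ioi_subset_Ioi hc0.le)
  -- Step 3: compute the full integral
  have step3 : ∫ t in Set.Ioi 0, g t = k ^ n * Real.Gamma n := by
    have := Real.integral_rpow_mul_exp_neg_mul_Ioi (a := (n:ℝ)) (r := k⁻¹) hn0 hki
    rw [hg]
    rw [this, one_div, inv_inv, Real.rpow_natCast]
  have hCval : C * k ^ n = (k * Real.exp (1 - k)) ^ n := by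
    rw [hC, mul_pow, ← Real.exp_nat_mul]
    rw [mul_comm]
    congr 1
    apply Real.exp_eq_exp.2
    rw [hc]
    field_simp
    ring
  calc upperIncGamma n c ≤ C * (k ^ n * Real.Gamma n) := le_trans step1 (by rw [← step3]; exact step2)
    _ = (k * Real.exp (1 - k)) ^ n * Real.Gamma n := by rw [← hCval]; ring
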